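/- arXiv:math/0305220 — 3 statements merged into one kernel-verified Lean document; each statement's English description precedes it below -/
import Mathlib

section
/- Let B : ℝ → ℝ satisfy B(ω+1) = B(ω) for all ω ∈ ℝ and B(ω) = -log ω + ω·B(1/ω) for every irrational ω ∈ (0,1). Let γ = (√5−1)/2, ω_k = 1/(k+γ) for k ≥ 1, and let εc : ℝ → ℝ be any positive function such that for some constant C₁ > 0 one has |log εc(ω_k) + B(ω_k)| ≤ C₁ for all k ≥ 1. Then there exist constants 0 < c ≤ C such that c/k ≤ εc(ω_k) ≤ C/k for all k ≥ 1. -/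
open Real

/-- If `εc` is a positive function satisfying Bryuno's interpolation formula
`|log εc(ω_k) + B(ω_k)| ≤ C₁` along the sequence `ω_k = 1/(k+γ)` for a
Bryuno-type function `B`, then `εc(ω_k)` scales as `1/k`:
there are constants `0 < c ≤ C` with `c/k ≤ εc(ω_k) ≤ C/k` for all `k ≥ 1`. -/
theorem critical_function_scaling_near_zero (B : ℝ → ℝ)
    (hper : ∀ ω : ℝ, B (ω + 1) = B ω)
    (heq : ∀ ω : ℝ, ω ∈ Set.Ioo (0:ℝ) 1 → Irrational ω →
      B ω = -Real.log ω + ω * B (1 / ω))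
    (εc : ℝ → ℝ) (hpos : ∀ ω : ℝ, 0 < εc ω)
    (C₁ : ℝ) (hC₁ : 0 < C₁)
    (hbound : ∀ k : ℕ, 1 ≤ k →
      |Real.log (εc (1 / ((k : ℝ) + (Real.sqrt 5 - 1) / 2))) +
        B (1 / ((k : ℝ) + (Real.sqrt 5 - 1) / 2))| ≤ C₁) :
    ∃ c C : ℝ, 0 < c ∧ c ≤ C ∧ ∀ k : ℕ, 1 ≤ k →
      c / (k : ℝ) ≤ εc (1 / ((k : ℝ) + (Real.sqrt 5 - 1) / 2)) ∧
      εc (1 / ((k : ℝ) + (Real.sqrt 5 - 1) / 2)) ≤ C / (k : ℝ) := by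
  set γ : ℝ := (Real.sqrt 5 - 1) / 2 with hγdef
  have hs1 : (1:ℝ) < Real.sqrt 5 := by
    have : Real.sqrt 1 < Real.sqrt 5 := Real.sqrt_lt_sqrt (by norm_num) (by norm_num)
    simpa using this
  have hs3 : Real.sqrt 5 < 3 := by
    have h9 : Real.sqrt 9 = 3 := by
      rw [show (9:ℝ) = 3 ^ 2 by norm_num, Real.sqrt_sq (by norm_num : (0:ℝ) ≤ 3)]
    have : Real.sqrt 5 < Real.sqrt 9 := Real.sqrt_lt_sqrt (by norm_num) (by norm_num)
    linarith
  have hγ0 : 0 < γ := by rw [hγdef]; linarith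
  have hγ1 : γ < 1 := by rw [hγdef]; linarith
  have hγirr : Irrational γ := by
    have h5 : Irrational (Real.sqrt 5) := by
      simpa using (Nat.prime_five.irrational_sqrt)
    have := (h5.sub_natCast 1).div_natCast (m := 2) (by norm_num)
    simpa [hγdef] using this
  -- periodicity over naturals
  have hperN : ∀ n : ℕ, B (γ + n) = B γ := by
    intro n
    induction n with
    | zero => simp
    | succ n ih =>
      have : γ + ((n : ℝ) + 1) = (γ + n) + 1 := by ring
      rw [Nat.cast_succ, this, hper, ih]
  -- key identity for B at ω_k
  have key : ∀ k : ℕ, 1 ≤ k →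
      B (1 / ((k : ℝ) + γ)) = Real.log ((k : ℝ) + γ) + (1 / ((k : ℝ) + γ)) * B γ := by
    intro k hk
    have hk1 : (1:ℝ) ≤ (k : ℝ) := by exact_mod_cast hk
    have hkγ : (1:ℝ) < (k : ℝ) + γ := by linarith
    have hne : ((k : ℝ) + γ) ≠ 0 := by linarith
    have hmem : (1 / ((k : ℝ) + γ)) ∈ Set.Ioo (0:ℝ) 1 := by
      constructor
      · positivity
      · rw [div_lt_one (by linarith)]; linarith
    have hirr : Irrational (1 / ((k : ℝ) + γ)) := by
      have : Irrational ((k : ℝ) + γ) := hγirr.natCast_add k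
      simpa using this.natCast_div (m := 1) one_ne_zero
    have := heq _ hmem hirr
    rw [this, one_div_one_div, Real.log_div one_ne_zero hne, Real.log_one]
    have hBk : B ((k : ℝ) + γ) = B γ := by rw [add_comm]; exact hperN k
    rw [hBk]; ring
  set M : ℝ := C₁ + |B γ| with hM
  refine ⟨Real.exp (-M) / 2, Real.exp M, by positivity, ?_, ?_⟩
  · have h1 : Real.exp (-M) ≤ Real.exp M := by
      apply Real.exp_le_exp.mpr
      have : 0 ≤ M := by rw [hM]; positivity
      linarith
    nlinarith [Real.exp_pos (-M)]
  · intro k hk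
    have hk1 : (1:ℝ) ≤ (k : ℝ) := by exact_mod_cast hk
    have hkγ : (1:ℝ) < (k : ℝ) + γ := by linarith
    have hkpos : (0:ℝ) < (k : ℝ) := by linarith
    set ε := εc (1 / ((k : ℝ) + γ)) with hε
    have hεpos : 0 < ε := hpos _
    have hb := hbound k hk
    rw [key k hk] at hb
    have habs := abs_le.mp hb
    -- bound the term (1/(k+γ)) * B γ
    have hsmall : |(1 / ((k : ℝ) + γ)) * B γ| ≤ |B γ| := by
      rw [abs_mul]
      have h1 : |1 / ((k : ℝ) + γ)| ≤ 1 := by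
        rw [abs_of_pos (by positivity)]
        rw [div_le_one (by linarith)]; linarith
      calc |1 / ((k : ℝ) + γ)| * |B γ| ≤ 1 * |B γ| :=
            mul_le_mul_of_nonneg_right h1 (abs_nonneg _)
        _ = |B γ| := one_mul _
    have hsmall' := abs_le.mp hsmall
    have hup : Real.log ε ≤ M - Real.log ((k : ℝ) + γ) := by
      rw [hM]; linarith [habs.2, hsmall'.1]
    have hlo : -M - Real.log ((k : ℝ) + γ) ≤ Real.log ε := by
      rw [hM]; linarith [habs.1, hsmall'.2]
    have hεeq : ε = Real.exp (Real.log ε) := (Real.exp_log hεpos).symm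
    have hexplog : Real.exp (Real.log ((k : ℝ) + γ)) = (k : ℝ) + γ :=
      Real.exp_log (by linarith)
    constructor
    · -- lower bound
      have : Real.exp (-M - Real.log ((k : ℝ) + γ)) ≤ ε := by
        rw [hεeq]; exact Real.exp_le_exp.mpr hlo
      have hrw : Real.exp (-M - Real.log ((k : ℝ) + γ)) = Real.exp (-M) / ((k : ℝ) + γ) := by
        rw [sub_eq_add_neg, Real.exp_add, Real.exp_neg (Real.log ((k : ℝ) + γ)), hexplog,
          div_eq_mul_inv]
      rw [hrw] at this
      have h2k : (k : ℝ) + γ ≤ 2 * k := by linarith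
      have : Real.exp (-M) / (2 * (k : ℝ)) ≤ Real.exp (-M) / ((k : ℝ) + γ) := by
        apply div_le_div_of_nonneg_left (le_of_lt (Real.exp_pos _)) (by linarith) h2k
      calc Real.exp (-M) / 2 / (k : ℝ) = Real.exp (-M) / (2 * (k : ℝ)) := by
            rw [div_div]
        _ ≤ Real.exp (-M) / ((k : ℝ) + γ) := this
        _ ≤ ε := by
            rw [hεeq]
            calc Real.exp (-M) / ((k : ℝ) + γ)
                = Real.exp (-M - Real.log ((k : ℝ) + γ)) := hrw.symm
              _ ≤ Real.exp (Real.log ε) := Real.exp_le_exp.mpr hlo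
    · -- upper bound
      have hrw : Real.exp (M - Real.log ((k : ℝ) + γ)) = Real.exp M / ((k : ℝ) + γ) := by
        rw [sub_eq_add_neg, Real.exp_add, Real.exp_neg (Real.log ((k : ℝ) + γ)), hexplog,
          div_eq_mul_inv]
      calc ε = Real.exp (Real.log ε) := hεeq
        _ ≤ Real.exp (M - Real.log ((k : ℝ) + γ)) := Real.exp_le_exp.mpr hup
        _ = Real.exp M / ((k : ℝ) + γ) := hrw
        _ ≤ Real.exp M / (k : ℝ) := by
            apply div_le_div_of_nonneg_left (le_of_lt (Real.exp_pos _)) hkpos (by linarith)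
end

section
/- Let B : ℝ → ℝ satisfy B(ω+1) = B(ω) for all ω ∈ ℝ and B(ω) = -log ω + ω·B(1/ω) for every irrational ω ∈ (0,1). Let γ = (√5−1)/2, a_k = 2^(k²)+γ, ω̃_k = 1/(k + 1/a_k) for k ≥ 1, and let εc : ℝ → ℝ be any positive function such that for some constant C₁ > 0 one has |log εc(ω̃_k) + B(ω̃_k)| ≤ C₁ for all k ≥ 1. Then there exists a constant C > 0 such that εc(ω̃_k) ≤ C·2^(−k)/k for all k ≥ 1. -/
open Real

lemma B_add_nat (B : ℝ → ℝ) (hper : ∀ ω : ℝ, B (ω + 1) = B ω) (x : ℝ) :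
    ∀ n : ℕ, B (x + n) = B x := by
  intro n
  induction n with
  | zero => simp
  | succ n ih =>
    push_cast
    rw [show (x + ((n:ℝ)+1)) = (x + (n:ℝ)) + 1 by ring, hper, ih]

lemma gamma_irrational : Irrational ((Real.sqrt 5 - 1) / 2) := by
  have h5 : Irrational (Real.sqrt 5) := by
    simpa using (by norm_num : Nat.Prime 5).irrational_sqrt
  have := (Irrational.sub_ratCast 1 h5)
  have := this.div_natCast (m := 2) (by norm_num)
  simpa using this

/-- If `εc` is a positive function satisfying Bryuno's interpolation formula
`|log εc(ω̃_k) + B(ω̃_k)| ≤ C₁` along the sequence `ω̃_k = 1/(k + 1/(2^(k²)+γ))`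
for a Bryuno-type function `B`, then `εc(ω̃_k)` tends to zero exponentially fast:
there is `C > 0` with `εc(ω̃_k) ≤ C * 2^(-k) / k` for all `k ≥ 1`. -/
theorem critical_function_fast_decay (B : ℝ → ℝ)
    (hper : ∀ ω : ℝ, B (ω + 1) = B ω)
    (heq : ∀ ω : ℝ, ω ∈ Set.Ioo (0:ℝ) 1 → Irrational ω →
      B ω = -Real.log ω + ω * B (1 / ω))
    (εc : ℝ → ℝ) (hpos : ∀ ω : ℝ, 0 < εc ω)
    (C₁ : ℝ) (hC₁ : 0 < C₁)
    (hbound : ∀ k : ℕ, 1 ≤ k →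
      |Real.log (εc (1 / ((k : ℝ) + 1 / ((2 : ℝ) ^ (k ^ 2) + (Real.sqrt 5 - 1) / 2)))) +
        B (1 / ((k : ℝ) + 1 / ((2 : ℝ) ^ (k ^ 2) + (Real.sqrt 5 - 1) / 2)))| ≤ C₁) :
    ∃ C : ℝ, 0 < C ∧ ∀ k : ℕ, 1 ≤ k →
      εc (1 / ((k : ℝ) + 1 / ((2 : ℝ) ^ (k ^ 2) + (Real.sqrt 5 - 1) / 2))) ≤
        C * (2 : ℝ) ^ (-(k : ℝ)) / (k : ℝ) := by
  set γ : ℝ := (Real.sqrt 5 - 1) / 2 with hγdef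
  have hγirr : Irrational γ := gamma_irrational
  have hγpos : 0 < γ := by
    have : (2:ℝ) < Real.sqrt 5 := by
      have : Real.sqrt 4 < Real.sqrt 5 := by
        apply Real.sqrt_lt_sqrt <;> norm_num
      simpa [show Real.sqrt 4 = 2 by
        rw [show (4:ℝ) = 2^2 by norm_num, Real.sqrt_sq]; norm_num] using this
    simp only [hγdef]; linarith
  have hγlt : γ < 1 := by
    have : Real.sqrt 5 < 3 := by
      have : Real.sqrt 5 < Real.sqrt 9 := by
        apply Real.sqrt_lt_sqrt <;> norm_num
      simpa [show Real.sqrt 9 = 3 by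
        rw [show (9:ℝ) = 3^2 by norm_num, Real.sqrt_sq]; norm_num] using this
    simp only [hγdef]; linarith
  refine ⟨Real.exp (C₁ + |B γ| + Real.log 2), Real.exp_pos _, ?_⟩
  intro k hk
  -- abbreviations
  set a : ℝ := (2 : ℝ) ^ (k ^ 2) + γ with hadef
  have hacast : a = ((2 ^ (k ^ 2) : ℕ) : ℝ) + γ := by push_cast [hadef]; ring
  have hpow1 : (1:ℝ) ≤ (2:ℝ) ^ (k ^ 2) := one_le_pow₀ (by norm_num)
  have ha1 : 1 < a := by simp only [hadef]; linarith
  have ha0 : 0 < a := by linarith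
  have hairr : Irrational a := by
    rw [hacast, add_comm]; exact hγirr.add_natCast _
  have hk1 : (1:ℝ) ≤ (k:ℝ) := by exact_mod_cast hk
  set d : ℝ := (k : ℝ) + 1 / a with hddef
  have hinva : 0 < 1/a := by positivity
  have hinva1 : 1/a < 1 := by rw [div_lt_one ha0]; linarith
  have hd1 : 1 < d := by simp only [hddef]; linarith
  have hd0 : 0 < d := by linarith
  set ω : ℝ := 1 / d with hωdef
  have hω0 : 0 < ω := by positivity
  have hω1 : ω < 1 := by rw [hωdef, div_lt_one hd0]; exact hd1
  have hinvairr : Irrational (1/a) := by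
    simpa [one_div] using hairr.inv
  have hdirr : Irrational d := by
    rw [hddef]; exact hinvairr.natCast_add k
  have hωirr : Irrational ω := by
    simpa [hωdef, one_div] using hdirr.inv
  -- compute B ω
  have hBa : B a = B γ := by
    rw [hacast, add_comm]; exact B_add_nat B hper γ _
  have hBinva : B (1/a) = Real.log a + (1/a) * B γ := by
    rw [heq (1/a) ⟨hinva, hinva1⟩ hinvairr]
    rw [one_div_one_div, Real.log_div one_ne_zero (ne_of_gt ha0), hBa]
    simp
  have hBd : B d = B (1/a) := by
    rw [hddef, add_comm]; exact B_add_nat B hper (1/a) k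
  have hBω : B ω = Real.log d + ω * (Real.log a + (1/a) * B γ) := by
    rw [hωdef, heq (1/d) ⟨by positivity, by rwa [div_lt_one hd0]⟩ hωirr]
    rw [one_div_one_div, Real.log_div one_ne_zero (ne_of_gt hd0), hBd, hBinva]
    simp
  -- lower bound on B ω
  have hlogd : Real.log (k:ℝ) ≤ Real.log d := by
    apply Real.log_le_log (by linarith) (by simp only [hddef]; linarith)
  have hloga : (k:ℝ)^2 * Real.log 2 ≤ Real.log a := by
    have : Real.log ((2:ℝ) ^ (k^2)) ≤ Real.log a := by
      apply Real.log_le_log (by positivity) (by simp only [hadef]; linarith)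
    rwa [Real.log_pow, Nat.cast_pow] at this
  have hloga0 : 0 ≤ Real.log a := le_trans (by positivity) hloga
  have hωlb : 1 / ((k:ℝ) + 1) ≤ ω := by
    rw [hωdef]
    apply one_div_le_one_div_of_le (by linarith)
    simp only [hddef]; linarith
  have hterm : ((k:ℝ) - 1) * Real.log 2 ≤ ω * Real.log a := by
    have h1 : (1 / ((k:ℝ)+1)) * ((k:ℝ)^2 * Real.log 2) ≤ ω * Real.log a := by
      apply mul_le_mul hωlb hloga (by positivity) (le_of_lt hω0)
    have h2 : ((k:ℝ) - 1) * Real.log 2 ≤ (1 / ((k:ℝ)+1)) * ((k:ℝ)^2 * Real.log 2) := by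
      rw [div_mul_eq_mul_div, one_mul, le_div_iff₀ (by linarith)]
      have hl2 : (0:ℝ) ≤ Real.log 2 := Real.log_nonneg (by norm_num)
      nlinarith
    linarith
  have hterm2 : -|B γ| ≤ ω * ((1/a) * B γ) := by
    have habs : |ω * ((1/a) * B γ)| ≤ |B γ| := by
      rw [abs_mul, abs_mul]
      have h1 : |ω| ≤ 1 := by rw [abs_of_pos hω0]; linarith
      have h2 : |1/a| ≤ 1 := by rw [abs_of_pos hinva]; linarith
      calc |ω| * (|1/a| * |B γ|) ≤ 1 * (1 * |B γ|) := by
            apply mul_le_mul h1 (mul_le_mul h2 le_rfl (abs_nonneg _) zero_le_one)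
              (by positivity) zero_le_one
        _ = |B γ| := by ring
    linarith [neg_abs_le (ω * ((1/a) * B γ)), abs_le.mp habs]
  have hBlb : Real.log (k:ℝ) + (k:ℝ) * Real.log 2 - Real.log 2 - |B γ| ≤ B ω := by
    rw [hBω, mul_add]
    have hring : ((k:ℝ) - 1) * Real.log 2 = (k:ℝ) * Real.log 2 - Real.log 2 := by ring
    rw [hring] at hterm
    linarith [hlogd, hterm, hterm2]
  -- conclude
  have hb := hbound k hk
  have hlog : Real.log (εc ω) ≤ C₁ - B ω := by
    have := (abs_le.mp hb).2
    linarith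
  have hεc : εc ω ≤ Real.exp (C₁ - B ω) := by
    calc εc ω = Real.exp (Real.log (εc ω)) := (Real.exp_log (hpos ω)).symm
      _ ≤ Real.exp (C₁ - B ω) := Real.exp_le_exp.mpr hlog
  have hfinal : Real.exp (C₁ - B ω) ≤
      Real.exp (C₁ + |B γ| + Real.log 2) * (2:ℝ) ^ (-(k:ℝ)) / (k:ℝ) := by
    have hrpow : (2:ℝ) ^ (-(k:ℝ)) = Real.exp (-(k:ℝ) * Real.log 2) := by
      rw [Real.rpow_def_of_pos (by norm_num)]; ring_nf
    have hexpk : Real.exp (-Real.log (k:ℝ)) = ((k:ℝ))⁻¹ := by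
      rw [Real.exp_neg, Real.exp_log (by linarith)]
    rw [hrpow, mul_comm (Real.exp _) _, ← Real.exp_add, div_eq_mul_inv, ← hexpk,
      ← Real.exp_add, Real.exp_le_exp]
    linarith [hBlb]
  linarith
end

section
/- Let B : ℝ → ℝ satisfy B(ω+1) = B(ω) for all ω ∈ ℝ and B(ω) = -log ω + ω·B(1/ω) for every irrational ω ∈ (0,1). Fix a natural number q ≥ 1 and a real β > 0, let γ = (√5−1)/2 and ω_n = 1/(q + 1/(n+γ)) for n ≥ 1, and let εc : ℝ → ℝ be a positive function such that for some C₁ > 0 one has |log εc(ω_n) + β·B(ω_n)| ≤ C₁ for all n ≥ 1. Then there exist constants 0 < c ≤ C such that c·n^(−β/q) ≤ εc(ω_n) ≤ C·n^(−β/q) for all n ≥ 1. -/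
open Real

private lemma B_nat_per (B : ℝ → ℝ) (hper : ∀ ω : ℝ, B (ω + 1) = B ω) :
    ∀ (k : ℕ) (x : ℝ), B (x + k) = B x := by
  intro k
  induction k with
  | zero => intro x; simp
  | succ k ih =>
    intro x
    have h1 : x + ((k : ℝ) + 1) = (x + k) + 1 := by ring
    have : B (x + ((k : ℕ) + 1 : ℕ)) = B ((x + k) + 1) := by push_cast; rw [h1]
    rw [this, hper, ih]

private lemma gamma_facts :
    0 < (Real.sqrt 5 - 1) / 2 ∧ (Real.sqrt 5 - 1) / 2 < 1 ∧
      Irrational ((Real.sqrt 5 - 1) / 2) := by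
  have h2 : (2 : ℝ) < Real.sqrt 5 := by
    have : Real.sqrt 4 < Real.sqrt 5 := by
      apply Real.sqrt_lt_sqrt <;> norm_num
    simpa [show (4 : ℝ) = 2 ^ 2 by norm_num, Real.sqrt_sq] using this
  have h3 : Real.sqrt 5 < 3 := by
    rw [show (3 : ℝ) = Real.sqrt 9 by
      rw [show (9 : ℝ) = 3 ^ 2 by norm_num, Real.sqrt_sq]; norm_num]
    apply Real.sqrt_lt_sqrt <;> norm_num
  refine ⟨by linarith, by linarith, ?_⟩
  have hirr : Irrational (Real.sqrt 5) := by
    have := (by norm_num : Nat.Prime 5).irrational_sqrt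
    simpa using this
  have h1 : Irrational (Real.sqrt 5 - 1) := by
    have := (irrational_sub_natCast_iff (n := 1)).mpr hirr
    simpa using this
  have := (irrational_div_natCast_iff (n := 2)).mpr ⟨by norm_num, h1⟩
  simpa using this

set_option maxHeartbeats 1600000 in
/-- If `εc` is a positive function satisfying Bryuno's interpolation formula
`|log εc(ω_n) + β·B(ω_n)| ≤ C₁` along the sequence `ω_n = 1/(q + 1/(n+γ))`
(rotation numbers `[q,n,1,1,…]` tending to the resonance `1/q`) for a
Bryuno-type function `B`, then `εc(ω_n)` scales as `n^(-β/q)`. -/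
theorem critical_function_scaling_near_resonance (B : ℝ → ℝ)
    (hper : ∀ ω : ℝ, B (ω + 1) = B ω)
    (heq : ∀ ω : ℝ, ω ∈ Set.Ioo (0:ℝ) 1 → Irrational ω →
      B ω = -Real.log ω + ω * B (1 / ω))
    (q : ℕ) (hq : 1 ≤ q) (β : ℝ) (hβ : 0 < β)
    (εc : ℝ → ℝ) (hpos : ∀ ω : ℝ, 0 < εc ω)
    (C₁ : ℝ) (hC₁ : 0 < C₁)
    (hbound : ∀ n : ℕ, 1 ≤ n →
      |Real.log (εc (1 / ((q : ℝ) + 1 / ((n : ℝ) + (Real.sqrt 5 - 1) / 2)))) +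
        β * B (1 / ((q : ℝ) + 1 / ((n : ℝ) + (Real.sqrt 5 - 1) / 2)))| ≤ C₁) :
    ∃ c C : ℝ, 0 < c ∧ c ≤ C ∧ ∀ n : ℕ, 1 ≤ n →
      c * (n : ℝ) ^ (-(β / (q : ℝ))) ≤
        εc (1 / ((q : ℝ) + 1 / ((n : ℝ) + (Real.sqrt 5 - 1) / 2))) ∧
      εc (1 / ((q : ℝ) + 1 / ((n : ℝ) + (Real.sqrt 5 - 1) / 2))) ≤
        C * (n : ℝ) ^ (-(β / (q : ℝ))) := by
  obtain ⟨hγ0, hγ1, hγirr⟩ := gamma_facts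
  set γ : ℝ := (Real.sqrt 5 - 1) / 2 with hγdef
  have hq1 : (1 : ℝ) ≤ (q : ℝ) := by exact_mod_cast hq
  have hq0 : (0 : ℝ) < (q : ℝ) := by linarith
  -- the uniform constant
  set K : ℝ := C₁ + β * Real.log ((q : ℝ) + 1) + β * |B γ| + β * 3 with hKdef
  have hlogq1 : 0 ≤ Real.log ((q : ℝ) + 1) := Real.log_nonneg (by linarith)
  have hK0 : 0 < K := by
    have h1 : 0 ≤ β * Real.log ((q : ℝ) + 1) := by positivity
    have h2 : 0 ≤ β * |B γ| := by positivity
    have h3 : 0 < β * 3 := by positivity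
    linarith
  have key : ∀ n : ℕ, 1 ≤ n →
      |Real.log (εc (1 / ((q : ℝ) + 1 / ((n : ℝ) + γ)))) +
        β / (q : ℝ) * Real.log n| ≤ K := by
    intro n hn
    have hn1 : (1 : ℝ) ≤ (n : ℝ) := by exact_mod_cast hn
    set t : ℝ := (n : ℝ) + γ with htdef
    have ht1 : 1 < t := by linarith
    have ht0 : 0 < t := by linarith
    set u : ℝ := 1 / t with hudef
    have hu0 : 0 < u := by positivity
    have hu1 : u < 1 := by
      rw [hudef]; rw [div_lt_one ht0]; linarith
    set d : ℝ := (q : ℝ) + u with hddef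
    have hd1 : 1 < d := by linarith
    have hd0 : 0 < d := by linarith
    have hdq1 : d < (q : ℝ) + 1 := by linarith
    set ω : ℝ := 1 / d with hωdef
    have hω0 : 0 < ω := by positivity
    have hω1 : ω < 1 := by rw [hωdef, div_lt_one hd0]; linarith
    -- irrationality
    have htirr : Irrational t := (irrational_natCast_add_iff (n := n)).mpr hγirr
    have huirr : Irrational u := by
      rw [hudef, one_div]; exact irrational_inv_iff.mpr htirr
    have hdirr : Irrational d := (irrational_natCast_add_iff (n := q)).mpr huirr
    have hωirr : Irrational ω := by
      rw [hωdef, one_div]; exact irrational_inv_iff.mpr hdirr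
    -- B values
    have hBt : B t = B γ := by
      have := B_nat_per B hper n γ
      rwa [add_comm] at this
    have hBu : B u = Real.log t + u * B γ := by
      have h := heq u ⟨hu0, hu1⟩ huirr
      rw [hudef] at h ⊢
      rw [one_div_one_div] at h
      rw [h, Real.log_div one_ne_zero (ne_of_gt ht0), Real.log_one, hBt]
      ring
    have hBd : B d = B u := by
      have := B_nat_per B hper q u
      rw [hddef, add_comm]
      exact this
    have hBω : B ω = -Real.log ω + ω * (Real.log t + u * B γ) := by
      have h := heq ω ⟨hω0, hω1⟩ hωirr
      rw [hωdef] at h ⊢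
      rw [one_div_one_div] at h
      rw [h, hBd, hBu]
    -- decomposition
    have e1 : Real.log (εc ω) + β / (q : ℝ) * Real.log n
        = (Real.log (εc ω) + β * B ω) + β * Real.log ω - β * (ω * u) * B γ
          + β * (1 / (q : ℝ) * Real.log n - ω * Real.log t) := by
      rw [hBω]; ring
    have hA : |Real.log (εc ω) + β * B ω| ≤ C₁ := hbound n hn
    -- log ω bound
    have hlogd0 : 0 ≤ Real.log d := Real.log_nonneg (le_of_lt hd1)
    have hlogd : Real.log d ≤ Real.log ((q : ℝ) + 1) :=
      Real.log_le_log (by linarith) (le_of_lt hdq1)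
    have hlogω : |Real.log ω| ≤ Real.log ((q : ℝ) + 1) := by
      rw [hωdef, Real.log_div one_ne_zero (ne_of_gt hd0), Real.log_one]
      rw [abs_of_nonpos (by linarith)]
      linarith
    have hB2 : |β * Real.log ω| ≤ β * Real.log ((q : ℝ) + 1) := by
      rw [abs_mul, abs_of_pos hβ]
      exact mul_le_mul_of_nonneg_left hlogω (le_of_lt hβ)
    -- ω u Bγ bound
    have hB3 : |β * (ω * u) * B γ| ≤ β * |B γ| := by
      rw [abs_mul, abs_mul, abs_of_pos hβ, abs_of_pos (mul_pos hω0 hu0)]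
      have hωu1 : ω * u ≤ 1 :=
        mul_le_one₀ (le_of_lt hω1) (le_of_lt hu0) (le_of_lt hu1)
      calc β * (ω * u) * |B γ| ≤ β * 1 * |B γ| := by
            apply mul_le_mul_of_nonneg_right _ (abs_nonneg _)
            exact mul_le_mul_of_nonneg_left hωu1 (le_of_lt hβ)
        _ = β * |B γ| := by ring
    -- main term bound
    have hlogn0 : 0 ≤ Real.log n := Real.log_nonneg hn1
    have hlognt : Real.log n ≤ Real.log t := Real.log_le_log (by linarith) (by linarith)
    have hltd : Real.log t - Real.log n ≤ 1 := by
      have h := Real.log_le_sub_one_of_pos (show (0:ℝ) < t / n by positivity)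
      rw [Real.log_div (ne_of_gt ht0) (ne_of_gt (by linarith : (0:ℝ) < (n:ℝ)))] at h
      have : t / (n : ℝ) - 1 = γ / n := by field_simp [htdef]; linarith
      rw [this] at h
      have hγn : γ / (n : ℝ) ≤ 1 := by
        rw [div_le_one (by linarith)]; linarith
      linarith
    have hlogt0 : 0 ≤ Real.log t := Real.log_nonneg (le_of_lt ht1)
    have hlogtt : Real.log t ≤ t := by
      have := Real.log_le_sub_one_of_pos ht0
      linarith
    have hωq : ω ≤ 1 / (q : ℝ) := by
      rw [hωdef]
      apply one_div_le_one_div_of_le hq0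
      linarith
    have hωdiff0 : 0 ≤ 1 / (q : ℝ) - ω := by linarith
    have hωdiffu : 1 / (q : ℝ) - ω ≤ u := by
      rw [hωdef]
      have hqe : 1 / (q : ℝ) - 1 / d = u / ((q : ℝ) * d) := by
        rw [div_sub_div _ _ (ne_of_gt hq0) (ne_of_gt hd0)]
        congr 1
        rw [hddef]; ring
      rw [hqe, div_le_iff₀ (by positivity)]
      have h1d : (1 : ℝ) ≤ (q : ℝ) * d := by nlinarith
      calc u = u * 1 := (mul_one u).symm
        _ ≤ u * ((q : ℝ) * d) := mul_le_mul_of_nonneg_left h1d hu0.le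
    have hmain : |1 / (q : ℝ) * Real.log n - ω * Real.log t| ≤ 3 := by
      have hiden : 1 / (q : ℝ) * Real.log n - ω * Real.log t
          = 1 / (q : ℝ) * (Real.log n - Real.log t) + (1 / (q : ℝ) - ω) * Real.log t := by
        ring
      have hqinv1 : 1 / (q : ℝ) ≤ 1 := by
        rw [div_le_one hq0]; linarith
      have hqinv0 : 0 < 1 / (q : ℝ) := by positivity
      have hfirst1 : -1 ≤ 1 / (q : ℝ) * (Real.log n - Real.log t) := by nlinarith
      have hfirst2 : 1 / (q : ℝ) * (Real.log n - Real.log t) ≤ 0 := by nlinarith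
      have hsecond1 : 0 ≤ (1 / (q : ℝ) - ω) * Real.log t := mul_nonneg hωdiff0 hlogt0
      have hsecond2 : (1 / (q : ℝ) - ω) * Real.log t ≤ 1 := by
        have h1 : (1 / (q : ℝ) - ω) * Real.log t ≤ u * t :=
          mul_le_mul hωdiffu hlogtt hlogt0 (le_of_lt hu0)
        have h2 : u * t = 1 := by
          rw [hudef]; field_simp
        exact h1.trans (le_of_eq h2)
      rw [hiden]
      rw [abs_le]
      constructor <;> linarith
    have hB4 : |β * (1 / (q : ℝ) * Real.log n - ω * Real.log t)| ≤ β * 3 := by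
      rw [abs_mul, abs_of_pos hβ]
      exact mul_le_mul_of_nonneg_left hmain (le_of_lt hβ)
    -- combine
    rw [e1]
    calc |(Real.log (εc ω) + β * B ω) + β * Real.log ω - β * (ω * u) * B γ
          + β * (1 / (q : ℝ) * Real.log n - ω * Real.log t)|
        ≤ |(Real.log (εc ω) + β * B ω) + β * Real.log ω - β * (ω * u) * B γ|
          + |β * (1 / (q : ℝ) * Real.log n - ω * Real.log t)| := abs_add_le _ _
      _ ≤ |(Real.log (εc ω) + β * B ω) + β * Real.log ω| + |β * (ω * u) * B γ|
          + |β * (1 / (q : ℝ) * Real.log n - ω * Real.log t)| := by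
            have := abs_sub ((Real.log (εc ω) + β * B ω) + β * Real.log ω)
              (β * (ω * u) * B γ)
            linarith
      _ ≤ |Real.log (εc ω) + β * B ω| + |β * Real.log ω| + |β * (ω * u) * B γ|
          + |β * (1 / (q : ℝ) * Real.log n - ω * Real.log t)| := by
            have := abs_add_le (Real.log (εc ω) + β * B ω) (β * Real.log ω)
            linarith
      _ ≤ K := by rw [hKdef]; linarith
  -- conclusion
  refine ⟨Real.exp (-K), Real.exp K, Real.exp_pos _, Real.exp_le_exp.mpr (by linarith), ?_⟩
  intro n hn
  have hn1 : (1 : ℝ) ≤ (n : ℝ) := by exact_mod_cast hn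
  set ω : ℝ := 1 / ((q : ℝ) + 1 / ((n : ℝ) + γ)) with hωdef
  have hb := abs_le.mp (key n hn)
  have hεc : εc ω = Real.exp (Real.log (εc ω)) := (Real.exp_log (hpos ω)).symm
  have hrpow : (n : ℝ) ^ (-(β / (q : ℝ))) = Real.exp (-(β / (q : ℝ)) * Real.log n) := by
    rw [Real.rpow_def_of_pos (by linarith), mul_comm]
  constructor
  · rw [hrpow, ← Real.exp_add, hεc]
    apply Real.exp_le_exp.mpr
    have := hb.1
    linarith [hb.1]
  · rw [hrpow, ← Real.exp_add, hεc]
    apply Real.exp_le_exp.mpr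
    linarith [hb.2]
end
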